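/- arXiv:2410.14092 — 6 statements merged into one kernel-verified Lean document; each statement's English description precedes it below -/
import Mathlib

section
/- Let A ∈ ℝ^{d×d} be symmetric, let 1 ≤ k ≤ d, let ε > 0, and let A^ε be the thresholded matrix. If x* maximizes xᵀAx over the set {x ∈ ℝ^d : ‖x‖₂ = 1, ‖x‖₀ ≤ k} and x̃ maximizes xᵀA^εx over the same set, then |(x*)ᵀ A x* − x̃ᵀ A x̃| ≤ 2kε. -/
open Matrix BigOperators

/-- Number of nonzero coordinates of a vector (the "ℓ₀ norm"). -/
noncomputable def sparsity {d : ℕ} (x : Fin d → ℝ) : ℕ := {i : Fin d | x i ≠ 0}.ncard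

/-- The quadratic form xᵀ M x. -/
noncomputable def quadForm {d : ℕ} (M : Matrix (Fin d) (Fin d) ℝ) (x : Fin d → ℝ) : ℝ :=
  x ⬝ᵥ M.mulVec x

/-- The thresholded matrix: A^ε_{ij} = A_{ij} if |A_{ij}| > ε, else 0. -/
noncomputable def thresh {d : ℕ} (A : Matrix (Fin d) (Fin d) ℝ) (ε : ℝ) :
    Matrix (Fin d) (Fin d) ℝ :=
  Matrix.of fun i j => if ε < |A i j| then A i j else 0


lemma key {d k : ℕ} (A : Matrix (Fin d) (Fin d) ℝ) (ε : ℝ) (hε : 0 < ε)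
    (x : Fin d → ℝ) (hx2 : ∑ i, x i ^ 2 = 1) (hx0 : sparsity x ≤ k) :
    |quadForm A x - quadForm (thresh A ε) x| ≤ (k : ℝ) * ε := by
  classical
  set S : Finset (Fin d) := Finset.univ.filter (fun i => x i ≠ 0) with hS
  have hcard : S.card ≤ k := by
    have h1 : {i : Fin d | x i ≠ 0}.ncard = S.card := by
      rw [← Set.ncard_coe_finset S]; congr 1; ext i; simp [hS]
    rw [sparsity, h1] at hx0; exact hx0
  have hB : ∀ i j, |A i j - thresh A ε i j| ≤ ε := by
    intro i j
    by_cases h : ε < |A i j|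
    · simp [thresh, h]; linarith
    · simp [thresh, h]; linarith [not_lt.mp h]
  have habs : (∑ i ∈ S, |x i|) ^ 2 ≤ (k : ℝ) := by
    have := sq_sum_le_card_mul_sum_sq (s := S) (f := fun i => |x i|)
    have h2 : ∑ i ∈ S, |x i| ^ 2 ≤ 1 := by
      rw [← hx2]
      have : ∀ i ∈ S, |x i| ^ 2 = x i ^ 2 := fun i _ => sq_abs _
      rw [Finset.sum_congr rfl this]
      exact Finset.sum_le_sum_of_subset_of_nonneg (Finset.subset_univ S)
        (fun i _ _ => sq_nonneg _)
    calc (∑ i ∈ S, |x i|) ^ 2 ≤ S.card * ∑ i ∈ S, |x i| ^ 2 := this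
      _ ≤ (k : ℝ) * 1 := by
          apply mul_le_mul (by exact_mod_cast hcard) h2
            (Finset.sum_nonneg fun i _ => sq_nonneg _) (Nat.cast_nonneg k)
      _ = (k : ℝ) := mul_one _
  have hdiff : quadForm A x - quadForm (thresh A ε) x
      = ∑ i, ∑ j, x i * ((A i j - thresh A ε i j) * x j) := by
    simp [quadForm, dotProduct, Matrix.mulVec, Finset.mul_sum, sub_mul, mul_sub,
      Finset.sum_sub_distrib]
  rw [hdiff]
  have hsum : ∀ i, x i = 0 ∨ i ∈ S := by
    intro i; by_cases h : x i = 0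
    · exact Or.inl h
    · exact Or.inr (by simp [hS, h])
  calc |∑ i, ∑ j, x i * ((A i j - thresh A ε i j) * x j)|
      ≤ ∑ i, ∑ j, |x i| * (ε * |x j|) := by
        refine (Finset.abs_sum_le_sum_abs _ _).trans (Finset.sum_le_sum fun i _ => ?_)
        refine (Finset.abs_sum_le_sum_abs _ _).trans (Finset.sum_le_sum fun j _ => ?_)
        rw [abs_mul, abs_mul]
        exact mul_le_mul_of_nonneg_left
          (mul_le_mul_of_nonneg_right (hB i j) (abs_nonneg _)) (abs_nonneg _)
    _ = ε * (∑ i, |x i|) ^ 2 := by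
        rw [sq]; simp [Finset.mul_sum, Finset.sum_mul]; ring_nf
        congr 1; ext i; congr 1; ext j; ring
    _ = ε * (∑ i ∈ S, |x i|) ^ 2 := by
        congr 2
        refine (Finset.sum_subset (Finset.subset_univ S) fun i _ hi => ?_).symm
        rcases hsum i with h | h
        · simp [h]
        · exact absurd h hi
    _ ≤ ε * (k : ℝ) := by exact mul_le_mul_of_nonneg_left habs hε.le
    _ = (k : ℝ) * ε := mul_comm _ _

/-- If x* maximizes xᵀAx and x̃ maximizes xᵀA^εx over the unit-norm k-sparse vectors,
then |(x*)ᵀ A x* − x̃ᵀ A x̃| ≤ 2kε. -/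
theorem stmt_2 {d k : ℕ} (hd : 1 ≤ d) (hk1 : 1 ≤ k) (hkd : k ≤ d)
    (A : Matrix (Fin d) (Fin d) ℝ) (hA : A.IsSymm) (ε : ℝ) (hε : 0 < ε)
    (xstar xtil : Fin d → ℝ)
    (hxs2 : ∑ i, xstar i ^ 2 = 1) (hxs0 : sparsity xstar ≤ k)
    (hxsmax : ∀ x : Fin d → ℝ, ∑ i, x i ^ 2 = 1 → sparsity x ≤ k →
      quadForm A x ≤ quadForm A xstar)
    (hxt2 : ∑ i, xtil i ^ 2 = 1) (hxt0 : sparsity xtil ≤ k)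
    (hxtmax : ∀ x : Fin d → ℝ, ∑ i, x i ^ 2 = 1 → sparsity x ≤ k →
      quadForm (thresh A ε) x ≤ quadForm (thresh A ε) xtil) :
    |quadForm A xstar - quadForm A xtil| ≤ 2 * (k : ℝ) * ε := by
  have h1 := key A ε hε xstar hxs2 hxs0
  have h2 := key A ε hε xtil hxt2 hxt0
  have hge : quadForm A xtil ≤ quadForm A xstar := hxsmax xtil hxt2 hxt0
  have hle : quadForm (thresh A ε) xstar ≤ quadForm (thresh A ε) xtil :=
    hxtmax xstar hxs2 hxs0
  rw [abs_le] at h1 h2 ⊢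
  constructor <;> [linarith; linarith]
end

section
/- Let A ∈ ℝ^{d×d} be symmetric with block structure S_1,…,S_p, and let 1 ≤ k ≤ d. For each i ∈ [p] define OPT_i := sup { xᵀAx : x ∈ ℝ^d, ‖x‖₂ = 1, ‖x‖₀ ≤ k, supp(x) ⊆ S_i }. Then OPT(A,k) = max_{i∈[p]} OPT_i. -/
open Matrix BigOperators

/-- The Sparse PCA value OPT(A,k) = sup { xᵀAx : ‖x‖₂ = 1, ‖x‖₀ ≤ k }. -/
noncomputable def OPT {d : ℕ} (A : Matrix (Fin d) (Fin d) ℝ) (k : ℕ) : ℝ :=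
  sSup {v | ∃ x : Fin d → ℝ, ∑ i, x i ^ 2 = 1 ∧ sparsity x ≤ k ∧ v = quadForm A x}

lemma quadForm_expand {d : ℕ} (A : Matrix (Fin d) (Fin d) ℝ) (x : Fin d → ℝ) :
    quadForm A x = ∑ a, ∑ b, x a * A a b * x b := by
  simp [quadForm, dotProduct, Matrix.mulVec, Finset.mul_sum, mul_assoc]

lemma quadForm_smul {d : ℕ} (A : Matrix (Fin d) (Fin d) ℝ) (c : ℝ) (x : Fin d → ℝ) :
    quadForm A (fun j => c * x j) = c ^ 2 * quadForm A x := by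
  simp only [quadForm_expand, Finset.mul_sum]
  refine Finset.sum_congr rfl fun a _ => Finset.sum_congr rfl fun b _ => by ring

/-- For a block-structured symmetric matrix, OPT(A,k) equals the maximum over blocks of the
Sparse PCA value restricted to vectors supported in that block. -/
theorem stmt_3 {d p k : ℕ} (hd : 1 ≤ d) (hp : 1 ≤ p) (hk1 : 1 ≤ k) (hkd : k ≤ d)
    (A : Matrix (Fin d) (Fin d) ℝ) (hA : A.IsSymm)
    (S : Fin p → Set (Fin d))
    (hne : ∀ i, (S i).Nonempty)
    (hdisj : ∀ i j, i ≠ j → Disjoint (S i) (S j))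
    (hcover : (⋃ i, S i) = Set.univ)
    (hblock : ∀ i j : Fin p, i ≠ j → ∀ a ∈ S i, ∀ b ∈ S j, A a b = 0) :
    OPT A k = ⨆ i : Fin p, sSup {v | ∃ x : Fin d → ℝ, ∑ i', x i' ^ 2 = 1 ∧
      sparsity x ≤ k ∧ {j | x j ≠ 0} ⊆ S i ∧ v = quadForm A x} := by
  classical
  haveI : Nonempty (Fin p) := ⟨⟨0, hp⟩⟩
  set T : Set ℝ := {v | ∃ x : Fin d → ℝ, ∑ i, x i ^ 2 = 1 ∧ sparsity x ≤ k ∧ v = quadForm A x}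
    with hT
  set Ti : Fin p → Set ℝ := fun i => {v | ∃ x : Fin d → ℝ, ∑ i', x i' ^ 2 = 1 ∧
      sparsity x ≤ k ∧ {j | x j ≠ 0} ⊆ S i ∧ v = quadForm A x} with hTi
  have hmem : ∀ j : Fin d, ∃ i, j ∈ S i := fun j =>
    Set.mem_iUnion.mp (hcover ▸ Set.mem_univ j)
  -- bound on T
  have hbdd : BddAbove T := by
    refine ⟨∑ a, ∑ b, |A a b|, fun v hv => ?_⟩
    obtain ⟨x, hx1, _, rfl⟩ := hv
    have hxle : ∀ j, |x j| ≤ 1 := by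
      intro j
      have h1 : x j ^ 2 ≤ 1 := by
        rw [← hx1]
        exact Finset.single_le_sum (f := fun i => x i ^ 2)
          (fun i _ => sq_nonneg _) (Finset.mem_univ j)
      nlinarith [abs_nonneg (x j), sq_abs (x j)]
    rw [quadForm_expand]
    refine Finset.sum_le_sum fun a _ => Finset.sum_le_sum fun b _ => ?_
    calc x a * A a b * x b ≤ |x a * A a b * x b| := le_abs_self _
      _ = |x a| * |A a b| * |x b| := by rw [abs_mul, abs_mul]
      _ ≤ |A a b| * |x b| :=
          mul_le_mul_of_nonneg_right (mul_le_of_le_one_left (abs_nonneg _) (hxle a)) (abs_nonneg _)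
      _ ≤ |A a b| := mul_le_of_le_one_right (abs_nonneg _) (hxle b)
  -- Ti ⊆ T
  have hsub : ∀ i, Ti i ⊆ T := by
    rintro i v ⟨x, h1, h2, _, rfl⟩
    exact ⟨x, h1, h2, rfl⟩
  have hbddTi : ∀ i, BddAbove (Ti i) := fun i => hbdd.mono (hsub i)
  -- Ti nonempty
  have hneTi : ∀ i, (Ti i).Nonempty := by
    intro i
    obtain ⟨a, ha⟩ := hne i
    refine ⟨quadForm A (fun j => if j = a then 1 else 0),
      fun j => if j = a then 1 else 0, ?_, ?_, ?_, rfl⟩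
    · simp [Finset.sum_ite_eq']
    · have : {j : Fin d | (if j = a then (1:ℝ) else 0) ≠ 0} = {a} := by
        ext j; by_cases h : j = a <;> simp [h]
      rw [sparsity, this, Set.ncard_singleton]; exact hk1
    · intro j hj
      simp only [Set.mem_setOf_eq] at hj
      by_cases h : j = a
      · exact h ▸ ha
      · simp [h] at hj
  have hneT : T.Nonempty := (hneTi ⟨0, hp⟩).mono (hsub _)
  have hbddiSup : BddAbove (Set.range fun i => sSup (Ti i)) := (Set.finite_range _).bddAbove
  have hleM : ∀ i, sSup (Ti i) ≤ ⨆ i, sSup (Ti i) := fun i => le_ciSup hbddiSup i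
  refine le_antisymm ?_ ?_
  · -- sSup T ≤ ⨆ sSup Ti
    refine csSup_le hneT ?_
    · rintro v ⟨x, hx1, hxk, rfl⟩
      set M := ⨆ i, sSup (Ti i) with hM
      -- block pieces
      set y : Fin p → Fin d → ℝ := fun i j => if j ∈ S i then x j else 0 with hy
      set w : Fin p → ℝ := fun i => ∑ j, y i j ^ 2 with hw
      have hynot : ∀ i j, j ∉ S i → y i j = 0 := by intro i j h; simp [hy, h]
      have hyin : ∀ i j, j ∈ S i → y i j = x j := by intro i j h; simp [hy, h]
      have hwnonneg : ∀ i, 0 ≤ w i := fun i => Finset.sum_nonneg fun j _ => sq_nonneg _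
      -- per-point: unique block
      have huniq : ∀ (j : Fin d) (i0 i : Fin p), j ∈ S i0 → i ≠ i0 → j ∉ S i := by
        intro j i0 i hj0 hii0 hj
        exact Set.disjoint_left.mp (hdisj i i0 hii0) hj hj0
      -- sum of w = 1
      have hwsum : ∑ i, w i = 1 := by
        rw [hw]
        rw [Finset.sum_comm]
        rw [← hx1]
        refine Finset.sum_congr rfl fun j _ => ?_
        obtain ⟨i0, hi0⟩ := hmem j
        rw [Finset.sum_eq_single_of_mem i0 (Finset.mem_univ _)]
        · rw [hyin i0 j hi0]
        · intro i _ hii0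
          rw [hynot i j (huniq j i0 i hi0 hii0)]
          simp
      -- quadForm decomposes
      have hab : ∀ a b : Fin d, x a * A a b * x b = ∑ i, y i a * A a b * y i b := by
        intro a b
        obtain ⟨i0, hi0⟩ := hmem a
        rw [Finset.sum_eq_single_of_mem i0 (Finset.mem_univ _)]
        · rw [hyin i0 a hi0]
          by_cases hb : b ∈ S i0
          · rw [hyin i0 b hb]
          · obtain ⟨i1, hi1⟩ := hmem b
            have hne01 : i0 ≠ i1 := fun h => hb (h ▸ hi1)
            rw [hynot i0 b hb, hblock i0 i1 hne01 a hi0 b hi1]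
            ring
        · intro i _ hii0
          rw [hynot i a (huniq a i0 i hi0 hii0)]
          ring
      have hdecomp : quadForm A x = ∑ i, quadForm A (y i) := by
        simp only [quadForm_expand]
        calc ∑ a, ∑ b, x a * A a b * x b
            = ∑ a, ∑ b, ∑ i, y i a * A a b * y i b :=
              Finset.sum_congr rfl fun a _ => Finset.sum_congr rfl fun b _ => hab a b
          _ = ∑ a, ∑ i, ∑ b, y i a * A a b * y i b :=
              Finset.sum_congr rfl fun a _ => Finset.sum_comm
          _ = ∑ i, ∑ a, ∑ b, y i a * A a b * y i b := Finset.sum_comm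
      -- each block quadform ≤ w i * M
      have hkey : ∀ i, quadForm A (y i) ≤ w i * M := by
        intro i
        rcases eq_or_lt_of_le (hwnonneg i) with h0 | hpos
        · -- w i = 0 → y i = 0
          have hy0 : ∀ j, y i j = 0 := by
            intro j
            have : ∀ j ∈ Finset.univ, y i j ^ 2 = 0 := by
              intro j' _
              have := (Finset.sum_eq_zero_iff_of_nonneg
                (fun j'' _ => sq_nonneg (y i j''))).mp h0.symm
              exact this j' (Finset.mem_univ _)
            exact pow_eq_zero_iff (n := 2) (by norm_num) |>.mp (this j (Finset.mem_univ j))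
          have : quadForm A (y i) = 0 := by
            rw [quadForm_expand]
            refine Finset.sum_eq_zero fun a _ => Finset.sum_eq_zero fun b _ => ?_
            rw [hy0 a]; ring
          rw [this, ← h0, zero_mul]
        · -- normalize
          set c := Real.sqrt (w i) with hc
          have hc0 : 0 < c := Real.sqrt_pos.mpr hpos
          have hc2 : c ^ 2 = w i := Real.sq_sqrt (le_of_lt hpos)
          set z : Fin d → ℝ := fun j => c⁻¹ * y i j with hz
          have hz1 : ∑ j, z j ^ 2 = 1 := by
            have h1 : ∑ j, z j ^ 2 = (c⁻¹) ^ 2 * w i := by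
              simp only [hz, mul_pow, hw, Finset.mul_sum]
            rw [h1, inv_pow, hc2, inv_mul_cancel₀ (ne_of_gt hpos)]
          have hzsupp : {j | z j ≠ 0} ⊆ S i := by
            intro j hj
            simp only [Set.mem_setOf_eq, hz] at hj
            by_contra hji
            rw [hynot i j hji, mul_zero] at hj
            exact hj rfl
          have hzsp : sparsity z ≤ k := by
            refine le_trans ?_ hxk
            refine Set.ncard_le_ncard ?_ (Set.toFinite _)
            intro j hj
            simp only [Set.mem_setOf_eq, hz] at hj ⊢
            intro hxj
            apply hj
            by_cases hji : j ∈ S i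
            · rw [hyin i j hji, hxj, mul_zero]
            · rw [hynot i j hji, mul_zero]
          have hzmem : quadForm A z ∈ Ti i := ⟨z, hz1, hzsp, hzsupp, rfl⟩
          have hzle : quadForm A z ≤ M := le_trans (le_csSup (hbddTi i) hzmem) (hleM i)
          have hrel : quadForm A (y i) = w i * quadForm A z := by
            have h2 : quadForm A z = c⁻¹ ^ 2 * quadForm A (y i) := quadForm_smul A c⁻¹ (y i)
            rw [h2, inv_pow, hc2, mul_inv_cancel_left₀ (ne_of_gt hpos)]
          rw [hrel]
          exact mul_le_mul_of_nonneg_left hzle (hwnonneg i)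
      calc quadForm A x = ∑ i, quadForm A (y i) := hdecomp
        _ ≤ ∑ i, w i * M := Finset.sum_le_sum fun i _ => hkey i
        _ = (∑ i, w i) * M := by rw [Finset.sum_mul]
        _ = M := by rw [hwsum, one_mul]
  · exact ciSup_le fun i => csSup_le_csSup hbdd (hneTi i) (hsub i)
end

section
/- Let A ∈ ℝ^{d×d} be symmetric, let 1 ≤ k ≤ d, let ε ≥ 0, and let S_1,…,S_p be a partition of {1,…,d} into nonempty parts such that |A_{ij}| ≤ ε whenever i and j lie in different parts. For each j ∈ [p] define OPT_j := sup { xᵀAx : ‖x‖₂ = 1, ‖x‖₀ ≤ k, supp(x) ⊆ S_j }. Let m ≥ 1 and a ≥ 0 be reals, and suppose y ∈ ℝ^d satisfies ‖y‖₂ = 1, ‖y‖₀ ≤ k, supp(y) ⊆ S_i for some i ∈ [p], and yᵀAy ≥ (max_{j∈[p]} OPT_j)/m − a. Then yᵀAy ≥ OPT(A,k)/m − a − kε/m. -/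
open Matrix BigOperators

lemma quadForm_eq {d : ℕ} (A : Matrix (Fin d) (Fin d) ℝ) (w : Fin d → ℝ) :
    quadForm A w = ∑ a, ∑ b, w a * A a b * w b := by
  simp [quadForm, dotProduct, Matrix.mulVec, Finset.mul_sum, mul_assoc]

lemma sparsity_eq {d : ℕ} (x : Fin d → ℝ) :
    sparsity x = (Finset.univ.filter (fun i => x i ≠ 0)).card := by
  rw [sparsity, ← Set.ncard_coe_finset]
  congr 1; ext i; simp

lemma abs_le_one_of_sq {d : ℕ} (x : Fin d → ℝ) (hx : ∑ i, x i ^ 2 = 1) (a : Fin d) :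
    |x a| ≤ 1 := by
  have h1 : x a ^ 2 ≤ 1 := hx ▸ Finset.single_le_sum (f := fun i => x i ^ 2)
    (fun i _ => sq_nonneg _) (Finset.mem_univ a)
  nlinarith [abs_nonneg (x a), sq_abs (x a)]

lemma quad_le_bound {d : ℕ} (A : Matrix (Fin d) (Fin d) ℝ) (x : Fin d → ℝ)
    (hx : ∑ i, x i ^ 2 = 1) : quadForm A x ≤ ∑ a, ∑ b, |A a b| := by
  rw [quadForm_eq]
  apply Finset.sum_le_sum; intro a _
  apply Finset.sum_le_sum; intro b _
  calc x a * A a b * x b ≤ |x a * A a b * x b| := le_abs_self _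
    _ = |x a| * |A a b| * |x b| := by rw [abs_mul, abs_mul]
    _ ≤ 1 * |A a b| * 1 := by
        have h1 := abs_le_one_of_sq x hx a
        have h2 := abs_le_one_of_sq x hx b
        have := abs_nonneg (A a b)
        have := abs_nonneg (x a)
        have := abs_nonneg (x b)
        exact mul_le_mul (mul_le_mul h1 le_rfl (abs_nonneg _) zero_le_one) h2
          (abs_nonneg _) (by positivity)
    _ = |A a b| := by ring

lemma cs_bound {d k : ℕ} (x : Fin d → ℝ) (hx2 : ∑ i, x i ^ 2 = 1)
    (hx0 : sparsity x ≤ k) : (∑ i, |x i|) ^ 2 ≤ (k : ℝ) := by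
  classical
  set s := Finset.univ.filter (fun i => x i ≠ 0) with hs
  have h1 : ∑ i, |x i| = ∑ i ∈ s, |x i| * 1 := by
    simp only [mul_one]
    rw [hs, Finset.sum_filter]
    apply Finset.sum_congr rfl
    intro i _
    by_cases h : x i = 0 <;> simp [h]
  have h2 : (∑ i ∈ s, |x i| * 1) ^ 2 ≤ (∑ i ∈ s, |x i| ^ 2) * (∑ i ∈ s, (1:ℝ) ^ 2) :=
    Finset.sum_mul_sq_le_sq_mul_sq s _ _
  have h3 : ∑ i ∈ s, |x i| ^ 2 ≤ 1 := by
    rw [← hx2]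
    have : ∀ i ∈ s, |x i| ^ 2 = x i ^ 2 := fun i _ => sq_abs _
    rw [Finset.sum_congr rfl this]
    exact Finset.sum_le_sum_of_subset_of_nonneg (Finset.subset_univ s)
      (fun i _ _ => sq_nonneg _)
  have h4 : (∑ i ∈ s, (1:ℝ) ^ 2) = (s.card : ℝ) := by simp
  have h5 : (s.card : ℝ) ≤ (k : ℝ) := by
    exact_mod_cast (sparsity_eq x ▸ hx0)
  rw [h1]
  calc (∑ i ∈ s, |x i| * 1) ^ 2 ≤ (∑ i ∈ s, |x i| ^ 2) * (∑ i ∈ s, (1:ℝ) ^ 2) := h2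
    _ ≤ 1 * (s.card : ℝ) := by
        rw [h4]
        apply mul_le_mul_of_nonneg_right h3 (by positivity)
    _ ≤ (k : ℝ) := by rw [one_mul]; exact h5

lemma key_block {d p k : ℕ} (A : Matrix (Fin d) (Fin d) ℝ) (ε : ℝ) (hε : 0 ≤ ε)
    (S : Fin p → Set (Fin d))
    (hdisj : ∀ i j, i ≠ j → Disjoint (S i) (S j))
    (hcover : (⋃ i, S i) = Set.univ)
    (hblock : ∀ i j : Fin p, i ≠ j → ∀ a ∈ S i, ∀ b ∈ S j, |A a b| ≤ ε)
    (x : Fin d → ℝ) (hx2 : ∑ i, x i ^ 2 = 1) (hx0 : sparsity x ≤ k) :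
    ∃ (j : Fin p) (z : Fin d → ℝ), ∑ i, z i ^ 2 = 1 ∧ sparsity z ≤ k ∧
      {l | z l ≠ 0} ⊆ S j ∧ quadForm A x - (k : ℝ) * ε ≤ quadForm A z := by
  classical
  -- block assignment
  have hmem : ∀ l : Fin d, ∃ j, l ∈ S j := by
    intro l
    have : l ∈ ⋃ i, S i := hcover ▸ Set.mem_univ l
    exact Set.mem_iUnion.mp this
  choose blk hblk using hmem
  have hblk_uniq : ∀ l j, l ∈ S j → blk l = j := by
    intro l j hj
    by_contra h
    exact Set.disjoint_left.mp (hdisj _ _ h) (hblk l) hj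
  -- restrictions
  set xr : Fin p → Fin d → ℝ := fun j l => if blk l = j then x l else 0 with hxr
  set t : Fin p → ℝ := fun j => ∑ l, xr j l ^ 2 with ht
  have ht_nonneg : ∀ j, 0 ≤ t j := fun j => Finset.sum_nonneg (fun l _ => sq_nonneg _)
  have ht_sum : ∑ j, t j = 1 := by
    rw [ht]
    rw [Finset.sum_comm]
    rw [← hx2]
    apply Finset.sum_congr rfl
    intro l _
    have : ∀ j, xr j l ^ 2 = if blk l = j then x l ^ 2 else 0 := by
      intro j; rw [hxr]; by_cases h : blk l = j <;> simp [h]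
    rw [Finset.sum_congr rfl (fun j _ => this j)]
    simp
  set F : Fin d → Fin d → ℝ := fun a b => x a * A a b * x b with hF
  have hQ : quadForm A x = ∑ a, ∑ b, F a b := quadForm_eq A x
  -- sum over blocks of restricted quadforms
  have hdiag : ∑ j, quadForm A (xr j) = ∑ a, ∑ b, if blk a = blk b then F a b else 0 := by
    have h1 : ∀ j, quadForm A (xr j) =
        ∑ a, ∑ b, if blk a = j then (if blk b = j then F a b else 0) else 0 := by
      intro j
      rw [quadForm_eq]
      apply Finset.sum_congr rfl; intro a _
      apply Finset.sum_congr rfl; intro b _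
      rw [hxr, hF]
      by_cases h1 : blk a = j <;> by_cases h2 : blk b = j <;> simp [h1, h2]
    rw [Finset.sum_congr rfl (fun j _ => h1 j)]
    rw [Finset.sum_comm]
    apply Finset.sum_congr rfl; intro a _
    rw [Finset.sum_comm]
    apply Finset.sum_congr rfl; intro b _
    rw [Finset.sum_ite_eq Finset.univ (blk a) (fun j => if blk b = j then F a b else 0)]
    simp [eq_comm]
  -- cross term bound
  have hcross : ∑ a, ∑ b, (if blk a = blk b then 0 else F a b) ≤ (k : ℝ) * ε := by
    have hterm : ∀ a b : Fin d, (if blk a = blk b then 0 else F a b) ≤ ε * |x a| * |x b| := by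
      intro a b
      split
      · positivity
      · next h =>
        have hAb : |A a b| ≤ ε := hblock (blk a) (blk b) h a (hblk a) b (hblk b)
        calc F a b ≤ |F a b| := le_abs_self _
          _ = |x a| * |A a b| * |x b| := by rw [hF, abs_mul, abs_mul]
          _ ≤ |x a| * ε * |x b| := by
              apply mul_le_mul_of_nonneg_right _ (abs_nonneg _)
              exact mul_le_mul_of_nonneg_left hAb (abs_nonneg _)
          _ = ε * |x a| * |x b| := by ring
    calc ∑ a, ∑ b, (if blk a = blk b then 0 else F a b)
        ≤ ∑ a, ∑ b, ε * |x a| * |x b| :=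
          Finset.sum_le_sum (fun a _ => Finset.sum_le_sum (fun b _ => hterm a b))
      _ = ∑ a, ε * |x a| * ∑ b, |x b| := by
          refine Finset.sum_congr rfl fun a _ => ?_
          rw [Finset.mul_sum]
      _ = (∑ a, ε * |x a|) * ∑ b, |x b| := by rw [Finset.sum_mul]
      _ = ε * ((∑ i, |x i|) * (∑ i, |x i|)) := by rw [← Finset.mul_sum, mul_assoc]
      _ ≤ ε * (k : ℝ) := by
          apply mul_le_mul_of_nonneg_left _ hε
          have := cs_bound x hx2 hx0
          nlinarith [Finset.sum_nonneg (fun i (_ : i ∈ Finset.univ) => abs_nonneg (x i))]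
      _ = (k : ℝ) * ε := by ring
  -- split
  have hsplit : ∑ a, ∑ b, F a b = (∑ a, ∑ b, if blk a = blk b then F a b else 0)
      + ∑ a, ∑ b, (if blk a = blk b then 0 else F a b) := by
    rw [← Finset.sum_add_distrib]
    apply Finset.sum_congr rfl; intro a _
    rw [← Finset.sum_add_distrib]
    apply Finset.sum_congr rfl; intro b _
    split <;> simp
  have hmain : quadForm A x - (k : ℝ) * ε ≤ ∑ j, quadForm A (xr j) := by
    rw [hdiag, hQ]
    linarith [hcross, hsplit]
  -- zero blocks give zero quadform
  have hzero : ∀ j, t j = 0 → quadForm A (xr j) = 0 := by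
    intro j hj
    have hx0' : ∀ l, xr j l = 0 := by
      intro l
      have := (Finset.sum_eq_zero_iff_of_nonneg (fun l _ => sq_nonneg (xr j l))).mp hj
        l (Finset.mem_univ l)
      exact (pow_eq_zero_iff two_ne_zero).mp this
    rw [quadForm_eq]
    apply Finset.sum_eq_zero; intro a _
    apply Finset.sum_eq_zero; intro b _
    rw [hx0' a]; ring
  -- pick a good block
  set C : ℝ := quadForm A x - (k : ℝ) * ε with hC
  have hexists : ∃ j, 0 < t j ∧ t j * C ≤ quadForm A (xr j) := by
    by_contra h
    push_neg at h
    have hle : ∀ j, quadForm A (xr j) ≤ t j * C := by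
      intro j
      rcases eq_or_lt_of_le (ht_nonneg j) with h0 | h0
      · rw [hzero j h0.symm, ← h0]; simp
      · exact (h j h0).le
    have hpos : ∃ j₀ : Fin p, 0 < t j₀ := by
      by_contra hc
      push_neg at hc
      have : ∀ j, t j = 0 := fun j => le_antisymm (hc j) (ht_nonneg j)
      have : ∑ j, t j = 0 := Finset.sum_eq_zero (fun j _ => this j)
      rw [ht_sum] at this; norm_num at this
    obtain ⟨j₀, hj₀⟩ := hpos
    have hstrict : ∑ j, quadForm A (xr j) < ∑ j, t j * C := by
      apply Finset.sum_lt_sum (fun j _ => hle j)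
      exact ⟨j₀, Finset.mem_univ j₀, h j₀ hj₀⟩
    rw [← Finset.sum_mul, ht_sum, one_mul] at hstrict
    exact absurd hmain (by linarith)
  obtain ⟨j, htj, hcj⟩ := hexists
  refine ⟨j, fun l => xr j l / Real.sqrt (t j), ?_, ?_, ?_, ?_⟩
  · have hs : Real.sqrt (t j) ^ 2 = t j := Real.sq_sqrt htj.le
    have : ∀ l, (xr j l / Real.sqrt (t j)) ^ 2 = xr j l ^ 2 / t j := by
      intro l; rw [div_pow, hs]
    rw [Finset.sum_congr rfl (fun l _ => this l), ← Finset.sum_div]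
    exact div_self htj.ne'
  · apply le_trans _ hx0
    apply Set.ncard_le_ncard _ (Set.toFinite _)
    intro l hl
    simp only [Set.mem_setOf_eq] at hl ⊢
    intro hxl
    apply hl
    rw [hxr]
    simp [hxl]
  · intro l hl
    simp only [Set.mem_setOf_eq] at hl
    have : xr j l ≠ 0 := by
      intro h0; apply hl; rw [h0]; simp
    rw [hxr] at this
    by_cases hb : blk l = j
    · exact hb ▸ hblk l
    · simp [hb] at this
  · have hs : Real.sqrt (t j) * Real.sqrt (t j) = t j := Real.mul_self_sqrt htj.le
    have hzq : quadForm A (fun l => xr j l / Real.sqrt (t j)) = quadForm A (xr j) / t j := by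
      rw [quadForm_eq, quadForm_eq]
      simp only [Finset.sum_div]
      apply Finset.sum_congr rfl; intro a _
      apply Finset.sum_congr rfl; intro b _
      rw [← hs]
      have hsne : Real.sqrt (t j) ≠ 0 := by
        intro h0; rw [h0, mul_zero] at hs; exact htj.ne' hs.symm
      field_simp
      rw [Real.sq_sqrt (sq_nonneg _)]
    rw [hzq]
    rw [le_div_iff₀ htj]
    calc C * t j = t j * C := by ring
      _ ≤ quadForm A (xr j) := hcj


/-- A per-block approximate solution with multiplicative factor m and additive error a
yields a solution for the full problem with the same multiplicative factor and extra
additive error kε/m, provided all off-block entries are at most ε in absolute value. -/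
theorem stmt_5 {d p k : ℕ} (hd : 1 ≤ d) (hp : 1 ≤ p) (hk1 : 1 ≤ k) (hkd : k ≤ d)
    (A : Matrix (Fin d) (Fin d) ℝ) (hA : A.IsSymm) (ε : ℝ) (hε : 0 ≤ ε)
    (S : Fin p → Set (Fin d))
    (hne : ∀ i, (S i).Nonempty)
    (hdisj : ∀ i j, i ≠ j → Disjoint (S i) (S j))
    (hcover : (⋃ i, S i) = Set.univ)
    (hblock : ∀ i j : Fin p, i ≠ j → ∀ a ∈ S i, ∀ b ∈ S j, |A a b| ≤ ε)
    (m a : ℝ) (hm : 1 ≤ m) (ha : 0 ≤ a)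
    (y : Fin d → ℝ) (hy2 : ∑ i, y i ^ 2 = 1) (hy0 : sparsity y ≤ k)
    (i : Fin p) (hysupp : {j | y j ≠ 0} ⊆ S i)
    (hybound : quadForm A y ≥
      (⨆ j : Fin p, sSup {v | ∃ x : Fin d → ℝ, ∑ i', x i' ^ 2 = 1 ∧ sparsity x ≤ k ∧
        {l | x l ≠ 0} ⊆ S j ∧ v = quadForm A x}) / m - a) :
    quadForm A y ≥ OPT A k / m - a - (k : ℝ) * ε / m := by
  classical
  have hp' : Nonempty (Fin p) := ⟨⟨0, hp⟩⟩
  set T : ℝ := ⨆ j : Fin p, sSup {v | ∃ x : Fin d → ℝ, ∑ i', x i' ^ 2 = 1 ∧ sparsity x ≤ k ∧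
      {l | x l ≠ 0} ⊆ S j ∧ v = quadForm A x} with hT
  have hBdd : ∀ j : Fin p, BddAbove {v | ∃ x : Fin d → ℝ, ∑ i', x i' ^ 2 = 1 ∧
      sparsity x ≤ k ∧ {l | x l ≠ 0} ⊆ S j ∧ v = quadForm A x} := by
    intro j
    refine ⟨∑ a, ∑ b, |A a b|, ?_⟩
    rintro v ⟨x, hx1, -, -, rfl⟩
    exact quad_le_bound A x hx1
  have hTle : ∀ j : Fin p, sSup {v | ∃ x : Fin d → ℝ, ∑ i', x i' ^ 2 = 1 ∧ sparsity x ≤ k ∧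
      {l | x l ≠ 0} ⊆ S j ∧ v = quadForm A x} ≤ T :=
    fun j => by
      rw [hT]
      exact le_ciSup (f := fun j : Fin p => sSup {v | ∃ x : Fin d → ℝ,
        ∑ i', x i' ^ 2 = 1 ∧ sparsity x ≤ k ∧ {l | x l ≠ 0} ⊆ S j ∧ v = quadForm A x})
        (Set.Finite.bddAbove (Set.finite_range _)) j
  have hOPT : OPT A k ≤ T + (k : ℝ) * ε := by
    rw [OPT]
    refine csSup_le ⟨quadForm A y, y, hy2, hy0, rfl⟩ ?_
    rintro v ⟨x, hx1, hx0, rfl⟩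
    obtain ⟨j, z, hz1, hz0, hzs, hzq⟩ := key_block A ε hε S hdisj hcover hblock x hx1 hx0
    have h2 : quadForm A z ≤ sSup {v | ∃ x : Fin d → ℝ, ∑ i', x i' ^ 2 = 1 ∧
        sparsity x ≤ k ∧ {l | x l ≠ 0} ⊆ S j ∧ v = quadForm A x} :=
      le_csSup (hBdd j) ⟨z, hz1, hz0, hzs, rfl⟩
    have h3 := hTle j
    linarith
  have hm0 : (0:ℝ) < m := lt_of_lt_of_le one_pos hm
  have hdiv : (OPT A k - (k : ℝ) * ε) / m ≤ T / m :=
    (div_le_div_iff_of_pos_right hm0).mpr (by linarith)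
  have hsd : (OPT A k - (k : ℝ) * ε) / m = OPT A k / m - (k : ℝ) * ε / m :=
    sub_div _ _ _
  linarith [hybound]
end

section
/- Let A ∈ ℝ^{d×d} be symmetric and ε > 0, and let A^ε be the thresholded matrix. Then ‖A − A^ε‖∞ ≤ ε, and for every matrix B ∈ ℝ^{d×d} with ‖A − B‖∞ ≤ ε one has lbs(A^ε) ≤ lbs(B). Consequently, lbs(A^ε) = min { lbs(B) : B ∈ ℝ^{d×d}, ‖A − B‖∞ ≤ ε }, i.e., the thresholded matrix attains the ε-intrinsic dimension of A. -/
open Matrix BigOperators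

/-- Entrywise maximum absolute value: ‖M‖∞ = max_{i,j} |M i j|. -/
noncomputable def infNorm {d : ℕ} (M : Matrix (Fin d) (Fin d) ℝ) : ℝ :=
  ⨆ p : Fin d × Fin d, |M p.1 p.2|

/-- The support graph of a matrix B: distinct i, j adjacent iff B i j ≠ 0 or B j i ≠ 0. -/
def suppGraph {d : ℕ} (B : Matrix (Fin d) (Fin d) ℝ) : SimpleGraph (Fin d) where
  Adj i j := i ≠ j ∧ (B i j ≠ 0 ∨ B j i ≠ 0)
  symm := by
    refine ⟨?_⟩
    intro i j h
    exact ⟨h.1.symm, h.2.symm⟩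
  loopless := ⟨fun i h => h.1 rfl⟩

/-- The largest cardinality of a connected component of the support graph of B. -/
noncomputable def lbs {d : ℕ} (B : Matrix (Fin d) (Fin d) ℝ) : ℕ :=
  ⨆ v : Fin d, {w | (suppGraph B).Reachable v w}.ncard

lemma infNorm_entry_le {d : ℕ} (M : Matrix (Fin d) (Fin d) ℝ) (i j : Fin d) :
    |M i j| ≤ infNorm M :=
  le_ciSup (f := fun p : Fin d × Fin d => |M p.1 p.2|) (Set.Finite.bddAbove (Set.finite_range _)) ⟨i, j⟩

lemma thresh_approx {d : ℕ} (A : Matrix (Fin d) (Fin d) ℝ) (ε : ℝ) (hε : 0 < ε) :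
    infNorm (A - thresh A ε) ≤ ε := by
  refine Real.iSup_le (fun p => ?_) hε.le
  simp only [Matrix.sub_apply, thresh, Matrix.of_apply]
  split
  · simp [hε.le]
  · next h => simpa using not_lt.mp h

lemma lbs_mono {d : ℕ} (A : Matrix (Fin d) (Fin d) ℝ) (ε : ℝ)
    (B : Matrix (Fin d) (Fin d) ℝ) (hB : infNorm (A - B) ≤ ε) :
    lbs (thresh A ε) ≤ lbs B := by
  have hle : suppGraph (thresh A ε) ≤ suppGraph B := by
    intro i j hij
    refine ⟨hij.1, ?_⟩
    have key : ∀ a b : Fin d, (thresh A ε) a b ≠ 0 → B a b ≠ 0 := by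
      intro a b h hB0
      simp only [thresh, Matrix.of_apply] at h
      split at h
      · next hgt =>
        have := infNorm_entry_le (A - B) a b
        simp [Matrix.sub_apply, hB0] at this
        exact absurd (this.trans hB) (not_le.mpr hgt)
      · exact h rfl
    rcases hij.2 with h | h
    · exact Or.inl (key _ _ h)
    · exact Or.inr (key _ _ h)
  refine ciSup_le' fun v => ?_
  refine le_ciSup_of_le (Set.Finite.bddAbove (Set.finite_range _)) v ?_
  exact Set.ncard_le_ncard (fun w hw => hw.mono hle) (Set.toFinite _)

/-- The thresholded matrix A^ε is an ε-approximation of A whose largest block size is minimal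
among all ε-approximations of A: it attains the ε-intrinsic dimension of A. -/
theorem stmt_6 {d : ℕ} (A : Matrix (Fin d) (Fin d) ℝ) (hA : A.IsSymm) (ε : ℝ) (hε : 0 < ε) :
    infNorm (A - thresh A ε) ≤ ε ∧
    (∀ B : Matrix (Fin d) (Fin d) ℝ, infNorm (A - B) ≤ ε → lbs (thresh A ε) ≤ lbs B) ∧
    lbs (thresh A ε) = sInf (lbs '' {B : Matrix (Fin d) (Fin d) ℝ | infNorm (A - B) ≤ ε}) := by
  have h1 := thresh_approx A ε hε
  have h2 := fun B => lbs_mono A ε B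
  refine ⟨h1, h2, ?_⟩
  have hmem : lbs (thresh A ε) ∈ lbs '' {B : Matrix (Fin d) (Fin d) ℝ | infNorm (A - B) ≤ ε} :=
    ⟨thresh A ε, h1, rfl⟩
  refine le_antisymm (le_csInf ⟨_, hmem⟩ ?_) (csInf_le (OrderBot.bddBelow _) hmem)
  rintro n ⟨B, hB, rfl⟩
  exact h2 B hB
end

section
/- Let D ≥ 1 and p ≥ 1 be integers, let d₁,…,d_p be integers with 1 ≤ d_i ≤ D for every i, and set d := Σ_{i=1}^p d_i. Let g : ℝ → ℝ be convex and nondecreasing on the interval [1, ∞) with g(1) = 1. Then Σ_{i=1}^p g(d_i) ≤ ⌈d/D⌉ · g(D) + d. -/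
open BigOperators

/-- The combinatorial core of the runtime bound: if each dᵢ satisfies 1 ≤ dᵢ ≤ D,
d = Σ dᵢ, and g is convex and nondecreasing on [1, ∞) with g(1) = 1, then
Σ g(dᵢ) ≤ ⌈d/D⌉ · g(D) + d. -/
theorem stmt_9 {D p : ℕ} (hD : 1 ≤ D) (hp : 1 ≤ p)
    (dd : Fin p → ℕ) (hdd : ∀ i, 1 ≤ dd i ∧ dd i ≤ D)
    (d : ℕ) (hd : d = ∑ i, dd i)
    (g : ℝ → ℝ) (hconv : ConvexOn ℝ (Set.Ici (1 : ℝ)) g)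
    (hmono : MonotoneOn g (Set.Ici (1 : ℝ))) (hg1 : g 1 = 1) :
    ∑ i, g (dd i) ≤ (⌈(d : ℝ) / (D : ℝ)⌉ : ℝ) * g D + (d : ℝ) := by
  have hpd : p ≤ d := by
    rw [hd]
    calc p = ∑ _i : Fin p, 1 := by simp
    _ ≤ ∑ i, dd i := Finset.sum_le_sum fun i _ => (hdd i).1
  have hdpD : d ≤ p * D := by
    rw [hd]
    calc ∑ i, dd i ≤ ∑ _i : Fin p, D := Finset.sum_le_sum fun i _ => (hdd i).2
    _ = p * D := by simp [Nat.mul_comm]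
  rcases eq_or_lt_of_le hD with h1 | h2
  · -- D = 1
    have hD1 : D = 1 := h1.symm
    have hdi : ∀ i : Fin p, dd i = 1 := fun i => le_antisymm (hD1 ▸ (hdd i).2) (hdd i).1
    have hdp : d = p := by rw [hd]; simp [hdi]
    have hL : ∑ i, g (dd i) = p := by simp [hdi, hg1]
    rw [hL, hdp, hD1]
    push_cast
    rw [div_one, hg1, Int.ceil_natCast]
    push_cast
    have : (0:ℝ) ≤ p := Nat.cast_nonneg p
    linarith
  · -- D ≥ 2
    have hD1 : (1:ℝ) < (D:ℝ) := by exact_mod_cast h2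
    have hc : (0:ℝ) < (D:ℝ) - 1 := by linarith
    have hgD1 : (1:ℝ) ≤ g D := by
      rw [← hg1]
      exact hmono (Set.mem_Ici.2 le_rfl) (Set.mem_Ici.2 hD1.le) hD1.le
    -- pointwise convexity bound
    have key : ∀ i : Fin p, g (dd i) ≤
        ((D:ℝ) - dd i)/((D:ℝ)-1) + ((dd i : ℝ) - 1)/((D:ℝ)-1) * g D := by
      intro i
      have h1i : (1:ℝ) ≤ (dd i : ℝ) := by exact_mod_cast (hdd i).1
      have hiD : (dd i : ℝ) ≤ D := by exact_mod_cast (hdd i).2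
      have ha : (0:ℝ) ≤ ((D:ℝ) - dd i)/((D:ℝ)-1) := div_nonneg (by linarith) hc.le
      have hb : (0:ℝ) ≤ ((dd i : ℝ) - 1)/((D:ℝ)-1) := div_nonneg (by linarith) hc.le
      have hab : ((D:ℝ) - dd i)/((D:ℝ)-1) + ((dd i : ℝ) - 1)/((D:ℝ)-1) = 1 := by
        rw [← add_div, div_eq_one_iff_eq hc.ne']
        ring
      have hcv := hconv.2 (Set.mem_Ici.2 (le_refl (1:ℝ))) (Set.mem_Ici.2 hD1.le) ha hb hab
      simp only [smul_eq_mul, mul_one, hg1] at hcv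
      have hxx : ((D:ℝ) - dd i)/((D:ℝ)-1) + ((dd i : ℝ) - 1)/((D:ℝ)-1) * (D:ℝ)
          = (dd i : ℝ) := by
        rw [div_mul_eq_mul_div, ← add_div, div_eq_iff hc.ne']
        ring
      rw [hxx] at hcv
      exact hcv
    have hsum : ∑ i, g (dd i) ≤
        ((p:ℝ)*(D:ℝ) - d)/((D:ℝ)-1) + ((d:ℝ) - p)/((D:ℝ)-1) * g D := by
      calc ∑ i, g (dd i)
          ≤ ∑ i, (((D:ℝ) - dd i)/((D:ℝ)-1) + ((dd i : ℝ) - 1)/((D:ℝ)-1) * g D) :=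
            Finset.sum_le_sum fun i _ => key i
      _ = ((p:ℝ)*(D:ℝ) - d)/((D:ℝ)-1) + ((d:ℝ) - p)/((D:ℝ)-1) * g D := by
          rw [Finset.sum_add_distrib]
          have hds : ((d:ℝ)) = ∑ i, (dd i : ℝ) := by rw [hd]; push_cast; ring
          congr 1
          · rw [← Finset.sum_div]
            congr 1
            rw [Finset.sum_sub_distrib, ← hds]
            simp [Finset.card_fin]
          · rw [← Finset.sum_mul, ← Finset.sum_div]
            congr 2
            rw [Finset.sum_sub_distrib, ← hds]
            simp [Finset.card_fin]
      -- now final bounds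
    have hceil : ((d:ℝ))/((D:ℝ)) ≤ (⌈(d:ℝ)/(D:ℝ)⌉ : ℝ) := Int.le_ceil _
    have hDpos : (0:ℝ) < (D:ℝ) := by linarith
    have hpdR : (p:ℝ) ≤ d := by exact_mod_cast hpd
    have hdpDR : (d:ℝ) ≤ p * D := by exact_mod_cast hdpD
    have hb1 : ((d:ℝ) - p)/((D:ℝ)-1) ≤ (⌈(d:ℝ)/(D:ℝ)⌉ : ℝ) := by
      refine le_trans ?_ hceil
      rw [div_le_div_iff₀ hc hDpos]
      nlinarith
    have hb2 : ((p:ℝ)*(D:ℝ) - d)/((D:ℝ)-1) ≤ (d:ℝ) := by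
      rw [div_le_iff₀ hc]
      nlinarith
    calc ∑ i, g (dd i) ≤ ((p:ℝ)*(D:ℝ) - d)/((D:ℝ)-1) + ((d:ℝ) - p)/((D:ℝ)-1) * g D := hsum
    _ ≤ (d:ℝ) + (⌈(d:ℝ)/(D:ℝ)⌉ : ℝ) * g D := by
        have h0 : (0:ℝ) ≤ g D := by linarith
        have := mul_le_mul_of_nonneg_right hb1 h0
        linarith
    _ = (⌈(d:ℝ)/(D:ℝ)⌉ : ℝ) * g D + (d:ℝ) := by ring
end

section
/- Let g : ℝ → ℝ be convex and nondecreasing on [0, ∞) with g(0) = 0, and let a, b, d be real numbers with 0 < a ≤ b ≤ d. Then ⌈d/a⌉ · g(a) ≤ 2 · ⌈d/b⌉ · g(b). -/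
/-- Key inequality in the runtime analysis of the binary-search algorithm: the cost bound
⌈d/δ⌉·g(δ) is, up to a factor 2, monotone in δ. -/
theorem stmt_10 (g : ℝ → ℝ) (hconv : ConvexOn ℝ (Set.Ici (0 : ℝ)) g)
    (hmono : MonotoneOn g (Set.Ici (0 : ℝ))) (hg0 : g 0 = 0)
    (a b d : ℝ) (ha : 0 < a) (hab : a ≤ b) (hbd : b ≤ d) :
    (⌈d / a⌉ : ℝ) * g a ≤ 2 * ((⌈d / b⌉ : ℝ) * g b) := by
  have hb : 0 < b := lt_of_lt_of_le ha hab
  have hd : 0 < d := lt_of_lt_of_le hb hbd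
  have hga : 0 ≤ g a := by
    rw [← hg0]
    exact hmono (le_refl (0:ℝ) : (0:ℝ) ∈ Set.Ici (0:ℝ)) ha.le ha.le
  have hgb : 0 ≤ g b := by
    rw [← hg0]
    exact hmono (le_refl (0:ℝ) : (0:ℝ) ∈ Set.Ici (0:ℝ)) hb.le hb.le
  -- g a ≤ (a/b) * g b
  have hkey : g a ≤ (a / b) * g b := by
    have h := hconv.2 (le_refl (0:ℝ) : (0:ℝ) ∈ Set.Ici (0:ℝ)) (hb.le : b ∈ Set.Ici (0:ℝ))
      (sub_nonneg.mpr ((div_le_one hb).mpr hab)) (by positivity : (0:ℝ) ≤ a / b)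
      (by ring)
    simp only [smul_eq_mul, mul_zero, zero_add, hg0] at h
    have hab' : a / b * b = a := div_mul_cancel₀ a hb.ne'
    rw [hab'] at h
    linarith [h]
  -- ⌈d/a⌉ ≤ 2 * (d/a)
  have h1 : (1:ℝ) ≤ d / a := (one_le_div ha).mpr (hab.trans hbd)
  have hceil_a : (⌈d / a⌉ : ℝ) ≤ 2 * (d / a) := by
    have := Int.ceil_lt_add_one (d / a)
    linarith
  have hceil_b : (d / b) ≤ (⌈d / b⌉ : ℝ) := Int.le_ceil _
  calc (⌈d / a⌉ : ℝ) * g a ≤ (2 * (d / a)) * g a :=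
        mul_le_mul_of_nonneg_right hceil_a hga
    _ ≤ (2 * (d / a)) * ((a / b) * g b) := by
        apply mul_le_mul_of_nonneg_left hkey
        positivity
    _ = 2 * ((d / b) * g b) := by
        field_simp
    _ ≤ 2 * ((⌈d / b⌉ : ℝ) * g b) := by
        apply mul_le_mul_of_nonneg_left _ (by norm_num)
        exact mul_le_mul_of_nonneg_right hceil_b hgb
end
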